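/- arXiv:2409.03732 — 7 statements merged into one kernel-verified Lean document; each statement's English description precedes it below -/
import Mathlib

section
/- For every atom S with |S| ≥ 2, the measure μ(S) := Σ_{∅≠T⊆S} (−1)^{|S|−|T|} p(T) log p(T) satisfies (−1)^{|S|} μ(S) ≥ 0; i.e., atoms of even cardinality have nonnegative measure and atoms of odd cardinality have nonpositive measure. -/
open Finset BigOperators

variable {Ω : Type*} [Fintype Ω] [DecidableEq Ω]

/-- Probability of a subset: `p(T) = Σ_{ω∈T} p(ω)`. -/
def pS (p : Ω → ℝ) (T : Finset Ω) : ℝ := ∑ ω ∈ T, p ω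

/-- `p(T) log p(T)` (with `0 log 0 = 0` since `Real.log 0 = 0`). -/
noncomputable def plog (p : Ω → ℝ) (T : Finset Ω) : ℝ := pS p T * Real.log (pS p T)

/-- The interior-loss measure of an atom `S`. -/
noncomputable def mu (p : Ω → ℝ) (S : Finset Ω) : ℝ :=
  ∑ T ∈ S.powerset.filter (· ≠ ∅), (-1 : ℝ) ^ (S.card - T.card) * plog p T

/-- `μ` of a set of atoms, extended additively. -/
noncomputable def muSet (p : Ω → ℝ) (R : Finset (Finset Ω)) : ℝ := ∑ S ∈ R, mu p S

/-- A partition `X` crosses an atom `S` when `S` meets at least two distinct parts. -/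
def crossed (X : Finpartition (univ : Finset Ω)) (S : Finset Ω) : Prop :=
  ∃ P ∈ X.parts, ∃ Q ∈ X.parts, P ≠ Q ∧ (S ∩ P).Nonempty ∧ (S ∩ Q).Nonempty

open scoped Classical in
/-- The content `ΔX`: set of atoms crossed by the partition `X`. -/
noncomputable def content (X : Finpartition (univ : Finset Ω)) : Finset (Finset Ω) :=
  (univ : Finset (Finset Ω)).filter (fun S => 2 ≤ S.card ∧ crossed X S)

/-- Shannon entropy of a partition. -/
noncomputable def Hent (p : Ω → ℝ) (X : Finpartition (univ : Finset Ω)) : ℝ :=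
  - ∑ P ∈ X.parts, pS p P * Real.log (pS p P)

/-- `X` refines `Z`: every part of `X` lies in a part of `Z`. -/
def refines (X Z : Finpartition (univ : Finset Ω)) : Prop :=
  ∀ P ∈ X.parts, ∃ Q ∈ Z.parts, P ⊆ Q

section muSignAux

open intervalIntegral MeasureTheory

set_option linter.unusedSectionVars false




/-- FTC antiderivative: `∫_0^a (m+1)(c+t)^{-(m+2)} dt = c^{-(m+1)} - (c+a)^{-(m+1)}`. -/
lemma intA (m : ℕ) (c a : ℝ) (hc : 0 < c) (ha : 0 ≤ a) :
    ∫ t in (0:ℝ)..a, ((m:ℝ)+1) * ((c+t)⁻¹)^(m+2) = (c⁻¹)^(m+1) - ((c+a)⁻¹)^(m+1) := by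
  have key : ∀ x ∈ Set.uIcc (0:ℝ) a, HasDerivAt (fun t => -((c+t)⁻¹)^(m+1))
      (((m:ℝ)+1) * ((c+x)⁻¹)^(m+2)) x := by
    intro x hx
    rw [Set.uIcc_of_le ha] at hx
    have hne : c + x ≠ 0 := ne_of_gt (by linarith [hx.1])
    have h1 : HasDerivAt (fun t : ℝ => c + t) 1 x := (hasDerivAt_id x).const_add c
    have h2 : HasDerivAt (fun t : ℝ => (c + t)⁻¹) (-1 / (c+x)^2) x := h1.inv hne
    have h3 : HasDerivAt (fun t => -((c+t)⁻¹)^(m+1))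
        (-(((m+1:ℕ):ℝ) * ((c+x)⁻¹)^(m+1-1) * (-1/(c+x)^2))) x := (h2.pow (m+1)).neg
    convert h3 using 1
    simp only [Nat.add_sub_cancel]
    push_cast
    rw [div_eq_mul_inv, ← inv_pow]
    ring
  have hint : IntervalIntegrable (fun t => ((m:ℝ)+1) * ((c+t)⁻¹)^(m+2)) volume 0 a := by
    apply ContinuousOn.intervalIntegrable
    apply ContinuousOn.mul continuousOn_const
    apply ContinuousOn.pow
    apply ContinuousOn.inv₀ (continuous_add_left c).continuousOn
    intro x hx
    rw [Set.uIcc_of_le ha] at hx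
    exact ne_of_gt (by linarith [hx.1])
  rw [integral_eq_sub_of_hasDerivAt key hint]
  simp only [add_zero]
  ring

/-- `∫_0^a (c+t)⁻¹ dt = log (c+a) - log c`. -/
lemma intB (c a : ℝ) (hc : 0 < c) (ha : 0 ≤ a) :
    ∫ t in (0:ℝ)..a, (c+t)⁻¹ = Real.log (c+a) - Real.log c := by
  have key : ∀ x ∈ Set.uIcc (0:ℝ) a, HasDerivAt (fun t => Real.log (c+t)) ((c+x)⁻¹) x := by
    intro x hx
    rw [Set.uIcc_of_le ha] at hx
    have hne : c + x ≠ 0 := ne_of_gt (by linarith [hx.1])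
    have h1 : HasDerivAt (fun t : ℝ => c + t) 1 x := (hasDerivAt_id x).const_add c
    have h2 := h1.log hne
    convert h2 using 1
    field_simp
  have hint : IntervalIntegrable (fun t => (c+t)⁻¹) volume 0 a := by
    apply ContinuousOn.intervalIntegrable
    apply ContinuousOn.inv₀ (continuous_add_left c).continuousOn
    intro x hx
    rw [Set.uIcc_of_le ha] at hx
    exact ne_of_gt (by linarith [hx.1])
  rw [integral_eq_sub_of_hasDerivAt key hint]
  simp

/-- `∫_0^a (log (c+t) + 1) dt = (c+a) log (c+a) - c log c`. -/
lemma intC (c a : ℝ) (hc : 0 < c) (ha : 0 ≤ a) :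
    ∫ t in (0:ℝ)..a, (Real.log (c+t) + 1)
      = (c+a) * Real.log (c+a) - c * Real.log c := by
  have key : ∀ x ∈ Set.uIcc (0:ℝ) a, HasDerivAt (fun t => (c+t) * Real.log (c+t))
      (Real.log (c+x) + 1) x := by
    intro x hx
    rw [Set.uIcc_of_le ha] at hx
    have hpos : 0 < c + x := by linarith [hx.1]
    have hne : c + x ≠ 0 := ne_of_gt hpos
    have h1 : HasDerivAt (fun t : ℝ => c + t) 1 x := (hasDerivAt_id x).const_add c
    have h2 : HasDerivAt (fun t => (c+t) * Real.log (c+t))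
        (1 * Real.log (c+x) + (c+x) * (1 / (c+x))) x := h1.mul (h1.log hne)
    convert h2 using 1
    field_simp
  have hint : IntervalIntegrable (fun t => Real.log (c+t) + 1) volume 0 a := by
    apply ContinuousOn.intervalIntegrable
    apply ContinuousOn.add _ continuousOn_const
    apply ContinuousOn.log (continuous_add_left c).continuousOn
    intro x hx
    rw [Set.uIcc_of_le ha] at hx
    exact ne_of_gt (by linarith [hx.1])
  rw [integral_eq_sub_of_hasDerivAt key hint]
  simp

lemma pS_nonneg (p : Ω → ℝ) (hp : ∀ ω, 0 ≤ p ω) (T : Finset Ω) : 0 ≤ pS p T :=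
  Finset.sum_nonneg fun i _ => hp i

lemma intInt_aux (y d a r : ℝ) (hyd : 0 < y + d) (ha : 0 ≤ a) (n : ℕ) :
    IntervalIntegrable (fun t => r * (((y + t) + d)⁻¹)^n) volume 0 a := by
  apply ContinuousOn.intervalIntegrable
  apply ContinuousOn.mul continuousOn_const
  apply ContinuousOn.pow
  apply ContinuousOn.inv₀ (by fun_prop : ContinuousOn (fun t : ℝ => (y + t) + d) _)
  intro x hx
  rw [Set.uIcc_of_le ha] at hx
  exact ne_of_gt (by linarith [hx.1])

lemma lemA (p : Ω → ℝ) (hp : ∀ ω, 0 ≤ p ω) (S : Finset Ω) :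
    ∀ (k : ℕ) (y : ℝ), 0 < y →
      0 ≤ ∑ T ∈ S.powerset, (-1:ℝ)^T.card * ((y + pS p T)⁻¹)^(k+1) := by
  induction S using Finset.induction_on with
  | empty =>
      intro k y hy
      simp only [Finset.powerset_empty, Finset.sum_singleton, Finset.card_empty, pow_zero, one_mul]
      have : pS p ∅ = 0 := Finset.sum_empty
      rw [this, add_zero]
      positivity
  | @insert a S' ha IH =>
      intro k y hy
      have hps : ∀ T : Finset Ω, 0 ≤ pS p T := pS_nonneg p hp
      rw [Finset.sum_powerset_insert ha, ← Finset.sum_add_distrib]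
      have key : ∀ T ∈ S'.powerset,
          (-1:ℝ)^T.card * ((y + pS p T)⁻¹)^(k+1)
            + (-1:ℝ)^(insert a T).card * ((y + pS p (insert a T))⁻¹)^(k+1)
          = ∫ t in (0:ℝ)..(p a),
              ((-1:ℝ)^T.card * ((k:ℝ)+1)) * (((y + t) + pS p T)⁻¹)^(k+2) := by
        intro T hT
        have haT : a ∉ T := fun h => ha (Finset.mem_powerset.1 hT h)
        rw [Finset.card_insert_of_notMem haT,
          show pS p (insert a T) = p a + pS p T from Finset.sum_insert haT]
        have hc : 0 < y + pS p T := by have := hps T; linarith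
        have hI := intA k (y + pS p T) (p a) hc (hp a)
        have hfun : (fun t => ((-1:ℝ)^T.card * ((k:ℝ)+1)) * (((y + t) + pS p T)⁻¹)^(k+2))
            = fun t => (-1:ℝ)^T.card * (((k:ℝ)+1) * (((y + pS p T) + t)⁻¹)^(k+2)) := by
          funext t; ring_nf
        rw [hfun, intervalIntegral.integral_const_mul, hI, pow_succ]
        ring
      rw [Finset.sum_congr rfl key,
        ← integral_finset_sum (fun T hT => intInt_aux y (pS p T) (p a)
          ((-1:ℝ)^T.card * ((k:ℝ)+1)) (by have := hps T; linarith) (hp a) (k+2))]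
      apply integral_nonneg (hp a)
      intro t ht
      have hyt : 0 < y + t := by linarith [ht.1]
      have := IH (k+1) (y+t) hyt
      have hre : ∑ T ∈ S'.powerset, ((-1:ℝ)^T.card * ((k:ℝ)+1)) * (((y + t) + pS p T)⁻¹)^(k+2)
          = ((k:ℝ)+1) * ∑ T ∈ S'.powerset, (-1:ℝ)^T.card * (((y+t) + pS p T)⁻¹)^((k+1)+1) := by
        rw [Finset.mul_sum]
        exact Finset.sum_congr rfl fun T _ => by ring
      rw [hre]
      have hk : (0:ℝ) ≤ (k:ℝ)+1 := by positivity
      exact mul_nonneg hk this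

lemma lemB (p : Ω → ℝ) (hp : ∀ ω, 0 ≤ p ω) (S : Finset Ω) (hS : S.Nonempty)
    (y : ℝ) (hy : 0 < y) :
    0 ≤ ∑ T ∈ S.powerset, (-1:ℝ)^T.card * (-(Real.log (y + pS p T))) := by
  obtain ⟨a, haS⟩ := hS
  have hps : ∀ T : Finset Ω, 0 ≤ pS p T := pS_nonneg p hp
  rw [show S = insert a (S.erase a) from (Finset.insert_erase haS).symm,
    Finset.sum_powerset_insert (Finset.notMem_erase a S), ← Finset.sum_add_distrib]
  set S' := S.erase a with hS'
  have key : ∀ T ∈ S'.powerset,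
      (-1:ℝ)^T.card * (-(Real.log (y + pS p T)))
        + (-1:ℝ)^(insert a T).card * (-(Real.log (y + pS p (insert a T))))
      = ∫ t in (0:ℝ)..(p a), (-1:ℝ)^T.card * (((y + t) + pS p T)⁻¹)^1 := by
    intro T hT
    have haT : a ∉ T := fun h => Finset.notMem_erase a S (Finset.mem_powerset.1 hT h)
    rw [Finset.card_insert_of_notMem haT,
      show pS p (insert a T) = p a + pS p T from Finset.sum_insert haT]
    have hc : 0 < y + pS p T := by have := hps T; linarith
    have hI := intB (y + pS p T) (p a) hc (hp a)
    have hfun : (fun t => (-1:ℝ)^T.card * (((y + t) + pS p T)⁻¹)^1)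
        = fun t => (-1:ℝ)^T.card * ((y + pS p T) + t)⁻¹ := by
      funext t; rw [pow_one]; ring_nf
    rw [hfun, intervalIntegral.integral_const_mul, hI, pow_succ]
    ring
  rw [Finset.sum_congr rfl key,
    ← integral_finset_sum (fun T hT => by
        simpa using intInt_aux y (pS p T) (p a) ((-1:ℝ)^T.card)
          (by have := hps T; linarith) (hp a) 1)]
  apply integral_nonneg (hp a)
  intro t ht
  have hyt : 0 < y + t := by linarith [ht.1]
  have := lemA p hp S' 0 (y+t) hyt
  simpa using this

lemma lemC (p : Ω → ℝ) (hp : ∀ ω, 0 ≤ p ω) (S : Finset Ω) (hS : 2 ≤ S.card)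
    (y : ℝ) (hy : 0 < y) :
    0 ≤ ∑ T ∈ S.powerset, (-1:ℝ)^T.card * ((y + pS p T) * Real.log (y + pS p T)) := by
  have hSne : S.Nonempty := Finset.card_pos.1 (by omega)
  obtain ⟨a, haS⟩ := hSne
  have hps : ∀ T : Finset Ω, 0 ≤ pS p T := pS_nonneg p hp
  rw [show S = insert a (S.erase a) from (Finset.insert_erase haS).symm,
    Finset.sum_powerset_insert (Finset.notMem_erase a S), ← Finset.sum_add_distrib]
  set S' := S.erase a with hS'
  have hS'ne : S'.Nonempty := by
    rw [← Finset.card_pos, hS', Finset.card_erase_of_mem haS]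
    omega
  have key : ∀ T ∈ S'.powerset,
      (-1:ℝ)^T.card * ((y + pS p T) * Real.log (y + pS p T))
        + (-1:ℝ)^(insert a T).card
            * ((y + pS p (insert a T)) * Real.log (y + pS p (insert a T)))
      = ∫ t in (0:ℝ)..(p a),
          (-1:ℝ)^T.card * (-(Real.log ((y + t) + pS p T)) - 1) := by
    intro T hT
    have haT : a ∉ T := fun h => Finset.notMem_erase a S (Finset.mem_powerset.1 hT h)
    rw [Finset.card_insert_of_notMem haT,
      show pS p (insert a T) = p a + pS p T from Finset.sum_insert haT]
    have hc : 0 < y + pS p T := by have := hps T; linarith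
    have hI := intC (y + pS p T) (p a) hc (hp a)
    have hfun : (fun t => (-1:ℝ)^T.card * (-(Real.log ((y + t) + pS p T)) - 1))
        = fun t => (-(-1:ℝ)^T.card) * (Real.log ((y + pS p T) + t) + 1) := by
      funext t
      rw [show (y + t) + pS p T = (y + pS p T) + t by ring]
      ring
    rw [hfun, intervalIntegral.integral_const_mul, hI, pow_succ]
    ring
  rw [Finset.sum_congr rfl key,
    ← intervalIntegral.integral_finset_sum (fun T hT => by
      apply ContinuousOn.intervalIntegrable
      apply ContinuousOn.mul continuousOn_const
      apply ContinuousOn.sub _ continuousOn_const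
      apply ContinuousOn.neg
      apply ContinuousOn.log (by fun_prop : ContinuousOn (fun t : ℝ => (y+t) + pS p T) _)
      intro x hx
      rw [Set.uIcc_of_le (hp a)] at hx
      have := hps T
      exact ne_of_gt (by linarith [hx.1]))]
  apply integral_nonneg (hp a)
  intro t ht
  have hyt : 0 < y + t := by linarith [ht.1]
  have h1 := lemB p hp S' hS'ne (y+t) hyt
  have hsplit : ∑ T ∈ S'.powerset, (-1:ℝ)^T.card * (-(Real.log ((y + t) + pS p T)) - 1)
      = (∑ T ∈ S'.powerset, (-1:ℝ)^T.card * (-(Real.log ((y+t) + pS p T))))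
        - ∑ T ∈ S'.powerset, (-1:ℝ)^T.card := by
    rw [← Finset.sum_sub_distrib]
    exact Finset.sum_congr rfl fun T _ => by ring
  have hzero : ∑ T ∈ S'.powerset, (-1:ℝ)^T.card = 0 := by
    have := Finset.sum_powerset_neg_one_pow_card_of_nonempty hS'ne
    exact_mod_cast congrArg (Int.cast : ℤ → ℝ) this
  rw [hsplit, hzero, sub_zero]
  exact h1

end muSignAux

theorem mu_sign {Ω : Type*} [Fintype Ω] [DecidableEq Ω] (p : Ω → ℝ)
    (hp : ∀ ω, 0 ≤ p ω) (hsum : ∑ ω, p ω = 1)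
    (S : Finset Ω) (hS : 2 ≤ S.card) :
    0 ≤ (-1 : ℝ) ^ S.card * mu p S := by
  have hmu : mu p S = ∑ T ∈ S.powerset, (-1 : ℝ) ^ (S.card - T.card) * plog p T := by
    rw [mu]
    apply Finset.sum_filter_of_ne
    intro T hT hne
    intro h
    apply hne
    subst h
    simp [plog, pS]
  have hpull : (-1 : ℝ) ^ S.card * mu p S
      = ∑ T ∈ S.powerset, (-1 : ℝ) ^ T.card * plog p T := by
    rw [hmu, Finset.mul_sum]
    apply Finset.sum_congr rfl
    intro T hT
    have hTS : T.card ≤ S.card := Finset.card_le_card (Finset.mem_powerset.1 hT)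
    have hadd : S.card - T.card + T.card = S.card := Nat.sub_add_cancel hTS
    have hsq : (-1:ℝ)^(S.card - T.card) * (-1)^(S.card - T.card) = 1 := by
      rw [← pow_add]
      exact Even.neg_one_pow ⟨S.card - T.card, rfl⟩
    rw [show (-1:ℝ)^S.card = (-1)^(S.card - T.card) * (-1)^T.card from by rw [← pow_add, hadd]]
    linear_combination ((-1:ℝ)^T.card * plog p T) * hsq
  rw [hpull]
  set F : ℝ → ℝ :=
    fun y => ∑ T ∈ S.powerset, (-1:ℝ)^T.card * ((y + pS p T) * Real.log (y + pS p T)) with hF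
  have hcont : Continuous F := by
    apply continuous_finset_sum
    intro T _
    exact continuous_const.mul
      (Real.continuous_mul_log.comp (continuous_id.add continuous_const))
  have hlim : Filter.Tendsto F (nhdsWithin 0 (Set.Ioi 0)) (nhds (F 0)) :=
    (hcont.continuousAt.tendsto).mono_left nhdsWithin_le_nhds
  have h0 : 0 ≤ F 0 := by
    refine ge_of_tendsto hlim ?_
    refine Filter.eventually_of_mem self_mem_nhdsWithin fun y hy => ?_
    exact lemC p hp S hS y hy
  have : F 0 = ∑ T ∈ S.powerset, (-1:ℝ)^T.card * plog p T := by
    rw [hF]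
    simp [plog]
  rwa [this] at h0
end

section
/- For any subset A ⊆ Ω, the sum of μ(S) over all S ⊆ A with |S| ≥ 2 equals p(A) log p(A) − Σ_{ω∈A} p(ω) log p(ω). -/
open Finset BigOperators

variable {Ω : Type*} [Fintype Ω] [DecidableEq Ω]

lemma plog_empty (p : Ω → ℝ) : plog p (∅ : Finset Ω) = 0 := by
  simp [plog, pS]

lemma mu_eq (p : Ω → ℝ) (S : Finset Ω) :
    mu p S = ∑ T ∈ S.powerset, (-1 : ℝ) ^ (S.card - T.card) * plog p T := by
  rw [mu]
  refine Finset.sum_subset (filter_subset _ _) ?_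
  intro T hT hT'
  have : T = ∅ := by
    simp only [mem_filter, hT, true_and, not_not] at hT'
    simpa using hT'
  simp [this, plog_empty]

lemma sum_pm {α : Type*} [DecidableEq α] (s : Finset α) :
    ∑ U ∈ s.powerset, (-1 : ℝ) ^ U.card = if s = ∅ then 1 else 0 := by
  have h := Finset.sum_powerset_neg_one_pow_card (x := s)
  by_cases hs : s = ∅
  · simp [hs]
  · rw [if_neg hs]
    rw [if_neg hs] at h
    have h3 : ((∑ m ∈ s.powerset, (-1 : ℤ) ^ m.card : ℤ) : ℝ) = 0 := by exact_mod_cast h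
    push_cast at h3
    exact h3

lemma sum_mu_all (p : Ω → ℝ) (A : Finset Ω) :
    ∑ S ∈ A.powerset, mu p S = plog p A := by
  simp_rw [mu_eq]
  have h1 : ∀ S ∈ A.powerset, ∑ T ∈ S.powerset, (-1 : ℝ) ^ (S.card - T.card) * plog p T
      = ∑ T ∈ A.powerset, if T ⊆ S then (-1 : ℝ) ^ (S.card - T.card) * plog p T else 0 := by
    intro S hS
    rw [← Finset.sum_filter]
    congr 1
    ext T
    simp only [mem_powerset, mem_filter]
    constructor
    · intro h; exact ⟨h.trans (mem_powerset.mp hS), h⟩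
    · exact fun h => h.2
  rw [Finset.sum_congr rfl h1, Finset.sum_comm]
  have h2 : ∀ T ∈ A.powerset,
      (∑ S ∈ A.powerset, if T ⊆ S then (-1 : ℝ) ^ (S.card - T.card) * plog p T else 0)
      = if T = A then plog p A else 0 := by
    intro T hT
    rw [mem_powerset] at hT
    rw [← Finset.sum_filter]
    have hbij : ∑ S ∈ A.powerset.filter (T ⊆ ·), (-1 : ℝ) ^ (S.card - T.card) * plog p T
        = ∑ U ∈ (A \ T).powerset, (-1 : ℝ) ^ U.card * plog p T := by
      show ∑ S ∈ A.powerset.filter (T ⊆ ·), _ = _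
      refine Finset.sum_nbij' (fun S => S \ T) (fun U => T ∪ U) ?_ ?_ ?_ ?_ ?_
      · intro S hS
        simp only [mem_filter, mem_powerset] at hS
        exact mem_powerset.mpr (sdiff_subset_sdiff hS.1 le_rfl)
      · intro U hU
        simp only [mem_powerset] at hU
        simp only [mem_filter, mem_powerset]
        exact ⟨union_subset hT (hU.trans (sdiff_subset)), subset_union_left⟩
      · intro S hS
        simp only [mem_filter, mem_powerset] at hS
        exact union_sdiff_of_subset hS.2
      · intro U hU
        simp only [mem_powerset] at hU
        have hd : Disjoint T U := Finset.disjoint_left.mpr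
          (fun a haT haU => (Finset.mem_sdiff.mp (hU haU)).2 haT)
        show (T ∪ U) \ T = U
        rw [union_sdiff_cancel_left hd]
      · intro S hS
        simp only [mem_filter, mem_powerset] at hS
        congr 2
        rw [card_sdiff_of_subset hS.2]
    rw [hbij, ← Finset.sum_mul, sum_pm]
    by_cases hTA : T = A
    · simp [hTA]
    · have : ¬ (A \ T = ∅) := by
        rw [sdiff_eq_empty_iff_subset]
        intro h
        exact hTA (subset_antisymm hT h)
      simp [this, hTA]
  rw [Finset.sum_congr rfl h2, Finset.sum_ite_eq' A.powerset A (fun _ => plog p A)]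
  simp


theorem sum_mu_powerset {Ω : Type*} [Fintype Ω] [DecidableEq Ω] (p : Ω → ℝ)
    (hp : ∀ ω, 0 ≤ p ω) (hsum : ∑ ω, p ω = 1) (A : Finset Ω) :
    ∑ S ∈ A.powerset.filter (fun S => 2 ≤ S.card), mu p S
      = pS p A * Real.log (pS p A) - ∑ ω ∈ A, p ω * Real.log (p ω) := by
  have hsplit := Finset.sum_filter_add_sum_filter_not A.powerset (fun S => 2 ≤ S.card) (mu p)
  rw [sum_mu_all] at hsplit
  have hsmall : A.powerset.filter (fun S => ¬ 2 ≤ S.card) = insert ∅ (A.image ({·})) := by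
    ext S
    simp only [mem_filter, mem_powerset, mem_insert, mem_image, not_le]
    constructor
    · rintro ⟨hSA, hc⟩
      interval_cases h : S.card
      · exact Or.inl (card_eq_zero.mp h)
      · obtain ⟨a, rfl⟩ := card_eq_one.mp h
        exact Or.inr ⟨a, by simpa using hSA, rfl⟩
    · rintro (rfl | ⟨a, ha, rfl⟩)
      · simp
      · simp [ha]
  have hmu0 : mu p (∅ : Finset Ω) = 0 := by simp [mu, Finset.filter_singleton]
  have hmusing : ∀ a : Ω, mu p ({a} : Finset Ω) = p a * Real.log (p a) := by
    intro a
    have hps : ({a} : Finset Ω).powerset = {∅, {a}} := by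
      ext T; simp [Finset.subset_singleton_iff]
    rw [mu_eq, hps, Finset.sum_insert (by simpa using (Finset.singleton_ne_empty a).symm), Finset.sum_singleton]
    simp [plog, pS, plog_empty]
  have h2 : ∑ S ∈ A.powerset.filter (fun S => ¬ 2 ≤ S.card), mu p S
      = ∑ ω ∈ A, p ω * Real.log (p ω) := by
    rw [hsmall, Finset.sum_insert (by simp), hmu0,
      Finset.sum_image (fun a _ b _ h => Finset.singleton_injective h)]
    simp [hmusing]
  have : ∑ S ∈ A.powerset.filter (fun S => 2 ≤ S.card), mu p S
      = plog p A - ∑ ω ∈ A, p ω * Real.log (p ω) := by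
    rw [← h2]; linarith
  rw [this]; rfl
end

section
/- The sum of μ(S) over all atoms S ⊆ Ω with |S| ≥ 2 equals −Σ_{ω∈Ω} p(ω) log p(ω), the Shannon entropy of the discrete (singleton) partition of Ω. -/
open Finset BigOperators

variable {Ω : Type*} [Fintype Ω] [DecidableEq Ω]

lemma sum_pow_real {α : Type*} [DecidableEq α] (x : Finset α) :
    (∑ m ∈ x.powerset, (-1 : ℝ) ^ m.card) = if x = ∅ then 1 else 0 := by
  have h : ((∑ m ∈ x.powerset, (-1 : ℤ) ^ m.card : ℤ) : ℝ)
      = ∑ m ∈ x.powerset, (-1 : ℝ) ^ m.card := by push_cast; rfl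
  rw [← h, Finset.sum_powerset_neg_one_pow_card]
  split <;> simp

lemma innerAltSum {Ω : Type*} [Fintype Ω] [DecidableEq Ω] (T : Finset Ω) :
    ∑ S ∈ (univ : Finset (Finset Ω)).filter (fun S => T ⊆ S),
        (-1 : ℝ) ^ (S.card - T.card)
      = if T = (univ : Finset Ω) then 1 else 0 := by
  have key : ∑ S ∈ (univ : Finset (Finset Ω)).filter (fun S => T ⊆ S),
        (-1 : ℝ) ^ (S.card - T.card)
      = ∑ U ∈ Tᶜ.powerset, (-1 : ℝ) ^ U.card := by
    refine Finset.sum_nbij' (fun S => S \ T) (fun U => T ∪ U) ?_ ?_ ?_ ?_ ?_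
    · intro S hS
      simp only [mem_filter, mem_univ, true_and] at hS
      simp only [mem_powerset]
      intro x hx
      simp only [mem_sdiff] at hx
      simp [hx.2]
    · intro U hU
      simp only [mem_filter, mem_univ, true_and]
      exact subset_union_left
    · intro S hS
      simp only [mem_filter, mem_univ, true_and] at hS
      exact Finset.union_sdiff_of_subset hS
    · intro U hU
      simp only [mem_powerset] at hU
      show (T ∪ U) \ T = U
      rw [Finset.union_sdiff_cancel_left]
      rw [Finset.disjoint_left]
      intro a ha haU
      exact absurd ha (by simpa using hU haU)
    · intro S hS
      simp only [mem_filter, mem_univ, true_and] at hS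
      rw [Finset.card_sdiff_of_subset hS]
  rw [key, sum_pow_real]
  congr 1
  rw [eq_iff_iff]
  exact Finset.compl_eq_empty_iff T

lemma total_sum {Ω : Type*} [Fintype Ω] [DecidableEq Ω] (p : Ω → ℝ) :
    ∑ S ∈ (univ : Finset (Finset Ω)), mu p S = plog p (univ : Finset Ω) := by
  unfold mu
  rw [Finset.sum_comm' (s' := fun T => (univ : Finset (Finset Ω)).filter (fun S => T ⊆ S))
    (t' := (univ : Finset (Finset Ω)).filter (· ≠ ∅))
    (h := by
      intro S T
      simp only [mem_filter, mem_univ, true_and, mem_powerset]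
      try tauto)]
  rw [Finset.sum_congr rfl (fun T _ => by
      rw [← Finset.sum_mul, innerAltSum T])]
  rw [Finset.sum_eq_single (univ : Finset Ω)
    (fun T _ hT => by rw [if_neg hT, zero_mul])
    (fun h => by
      have hu : (univ : Finset Ω) = ∅ := by simpa using h
      rw [if_pos rfl, one_mul, hu]
      simp [plog, pS])]
  rw [if_pos rfl, one_mul]

theorem sum_mu_all_atoms {Ω : Type*} [Fintype Ω] [DecidableEq Ω] (p : Ω → ℝ)
    (hp : ∀ ω, 0 ≤ p ω) (hsum : ∑ ω, p ω = 1) :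
    ∑ S ∈ (univ : Finset (Finset Ω)).filter (fun S => 2 ≤ S.card), mu p S
      = - ∑ ω, p ω * Real.log (p ω) := by
  have htot : ∑ S ∈ (univ : Finset (Finset Ω)), mu p S = 0 := by
    rw [total_sum]
    unfold plog pS
    rw [hsum]; simp
  have hsplit := Finset.sum_filter_add_sum_filter_not (univ : Finset (Finset Ω))
    (fun S => 2 ≤ S.card) (mu p)
  have hsmall : ∑ S ∈ (univ : Finset (Finset Ω)).filter (fun S => ¬ 2 ≤ S.card), mu p S
      = ∑ ω, p ω * Real.log (p ω) := by
    have h1 : (univ : Finset (Finset Ω)).filter (fun S => ¬ 2 ≤ S.card)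
        = {(∅ : Finset Ω)} ∪ (univ : Finset Ω).image (fun ω => ({ω} : Finset Ω)) := by
      ext S
      simp only [mem_filter, mem_univ, true_and, mem_union, mem_singleton, mem_image]
      constructor
      · intro h
        have h' : S.card = 0 ∨ S.card = 1 := by omega
        rcases h' with h' | h'
        · left; exact Finset.card_eq_zero.mp h'
        · right
          obtain ⟨a, ha⟩ := Finset.card_eq_one.mp h'
          exact ⟨a, ha.symm⟩
      · rintro (rfl | ⟨a, rfl⟩) <;> simp
    rw [h1, Finset.sum_union]
    · have hmu0 : mu p (∅ : Finset Ω) = 0 := by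
        unfold mu
        rw [Finset.powerset_empty, Finset.filter_singleton]
        simp
      rw [Finset.sum_singleton, hmu0, zero_add]
      rw [Finset.sum_image (by intro a _ b _ h; simpa using h)]
      refine Finset.sum_congr rfl fun ω _ => ?_
      unfold mu
      have h2 : ({ω} : Finset Ω).powerset.filter (· ≠ ∅) = {({ω} : Finset Ω)} := by
        ext T
        simp only [mem_filter, mem_powerset, Finset.subset_singleton_iff, mem_singleton,
          ne_eq]
        constructor
        · rintro ⟨h1, h2⟩
          rcases h1 with rfl | rfl
          · exact absurd rfl h2
          · rfl
        · rintro rfl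
          refine ⟨Or.inr rfl, ?_⟩
          exact Finset.singleton_ne_empty ω
      rw [h2, Finset.sum_singleton]
      simp [plog, pS]
    · simp
  linarith [hsplit, htot, hsmall]
end

section
/- If partition Y refines partition X, then μ(ΔY \ ΔX) ≥ 0; equivalently the entropy is monotone under refinement: H(X) ≤ H(Y). -/
open Finset BigOperators

variable {Ω : Type*} [Fintype Ω] [DecidableEq Ω]

open scoped Classical

/-! ### Auxiliary lemmas -/

lemma neg_one_pow_powerset (x : Finset Ω) :
    (∑ m ∈ x.powerset, (-1 : ℝ) ^ m.card) = if x = ∅ then 1 else 0 := by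
  have h := Finset.sum_powerset_neg_one_pow_card (x := x)
  calc (∑ m ∈ x.powerset, (-1 : ℝ) ^ m.card)
      = ((∑ m ∈ x.powerset, (-1 : ℤ) ^ m.card : ℤ) : ℝ) := by push_cast; rfl
    _ = _ := by rw [h]; split <;> simp

lemma inner_alt (p : Ω → ℝ) {U S : Finset Ω} (hU : U ≠ ∅) (hUS : U ⊆ S) :
    ∑ T ∈ (S.powerset.filter (· ≠ ∅)).filter (U ⊆ ·), (-1 : ℝ) ^ (T.card - U.card)
      = if U = S then 1 else 0 := by
  have key : ∑ T ∈ (S.powerset.filter (· ≠ ∅)).filter (U ⊆ ·),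
      (-1 : ℝ) ^ (T.card - U.card) = ∑ V ∈ (S \ U).powerset, (-1 : ℝ) ^ V.card := by
    refine Finset.sum_nbij' (fun T => T \ U) (fun V => V ∪ U) ?_ ?_ ?_ ?_ ?_
    · intro T hT
      simp only [Finset.mem_filter, Finset.mem_powerset] at hT ⊢
      exact sdiff_subset_sdiff hT.1.1 le_rfl
    · intro V hV
      simp only [Finset.mem_filter, Finset.mem_powerset] at hV ⊢
      refine ⟨⟨Finset.union_subset (hV.trans (Finset.sdiff_subset)) hUS, ?_⟩,
        Finset.subset_union_right⟩
      intro h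
      exact hU (Finset.subset_empty.1 (h ▸ Finset.subset_union_right))
    · intro T hT
      simp only [Finset.mem_filter, Finset.mem_powerset] at hT
      exact Finset.sdiff_union_of_subset hT.2
    · intro V hV
      simp only [Finset.mem_powerset] at hV
      exact Finset.union_sdiff_cancel_right (sdiff_disjoint.mono_left hV)
    · intro T hT
      simp only [Finset.mem_filter, Finset.mem_powerset] at hT
      rw [Finset.card_sdiff_of_subset hT.2]
  rw [key, neg_one_pow_powerset]
  have hiff : S \ U = ∅ ↔ U = S := by
    rw [Finset.sdiff_eq_empty_iff_subset]
    exact ⟨fun h => le_antisymm hUS h, fun h => h ▸ le_rfl⟩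
  simp only [hiff]

/-- Möbius inversion: summing `mu` over all nonempty subsets of `S` recovers `plog S`. -/
lemma mobius (p : Ω → ℝ) (S : Finset Ω) :
    ∑ T ∈ S.powerset.filter (· ≠ ∅), mu p T = plog p S := by
  rcases eq_or_ne S ∅ with rfl | hS
  · simp [mu, plog, pS, Finset.powerset_empty, Finset.filter_singleton]
  · unfold mu
    rw [Finset.sum_comm' (t' := S.powerset.filter (· ≠ ∅))
      (s' := fun U => (S.powerset.filter (· ≠ ∅)).filter (U ⊆ ·))
      (by
        intro T U
        simp only [Finset.mem_filter, Finset.mem_powerset]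
        constructor
        · rintro ⟨⟨hTS, hTne⟩, hUT, hUne⟩
          exact ⟨⟨⟨hTS, hTne⟩, hUT⟩, hUT.trans hTS, hUne⟩
        · rintro ⟨⟨⟨hTS, hTne⟩, hUT⟩, hUS, hUne⟩
          exact ⟨⟨hTS, hTne⟩, hUT, hUne⟩)]
    have : ∀ U ∈ S.powerset.filter (· ≠ ∅),
        (∑ T ∈ (S.powerset.filter (· ≠ ∅)).filter (U ⊆ ·),
          (-1 : ℝ) ^ (T.card - U.card) * plog p U)
        = if U = S then plog p S else 0 := by
      intro U hU
      simp only [Finset.mem_filter, Finset.mem_powerset] at hU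
      rw [← Finset.sum_mul, inner_alt p hU.2 hU.1]
      split_ifs with h
      · rw [h, one_mul]
      · rw [zero_mul]
    rw [Finset.sum_congr rfl this, Finset.sum_ite_eq' (S.powerset.filter (· ≠ ∅)) S]
    simp [hS, Finset.mem_powerset]

lemma mu_singleton (p : Ω → ℝ) (ω : Ω) : mu p {ω} = plog p {ω} := by
  have h : ({ω} : Finset Ω).powerset.filter (· ≠ ∅) = {{ω}} := by
    ext T
    simp only [Finset.mem_filter, Finset.mem_powerset, Finset.subset_singleton_iff,
      Finset.mem_singleton, ne_eq]
    constructor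
    · rintro ⟨rfl | rfl, h2⟩
      · exact absurd rfl h2
      · rfl
    · rintro rfl
      exact ⟨Or.inr rfl, Finset.singleton_ne_empty ω⟩
  simp [mu, h]

lemma sum_card_one (p : Ω → ℝ) (P : Finset Ω) :
    ∑ T ∈ (P.powerset.filter (· ≠ ∅)).filter (fun T => T.card = 1), mu p T
      = ∑ ω ∈ P, plog p {ω} := by
  have h : (P.powerset.filter (· ≠ ∅)).filter (fun T => T.card = 1)
      = P.image (fun ω => ({ω} : Finset Ω)) := by
    ext T
    simp only [Finset.mem_filter, Finset.mem_powerset, Finset.mem_image, Finset.card_eq_one]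
    constructor
    · rintro ⟨⟨hTP, -⟩, a, rfl⟩
      exact ⟨a, hTP (Finset.mem_singleton_self a), rfl⟩
    · rintro ⟨a, ha, rfl⟩
      exact ⟨⟨Finset.singleton_subset_iff.2 ha, Finset.singleton_ne_empty a⟩, a, rfl⟩
  rw [h, Finset.sum_image (fun a _ b _ hab => Finset.singleton_injective hab)]
  exact Finset.sum_congr rfl fun ω _ => mu_singleton p ω

lemma subset_part_of_not_crossed (X : Finpartition (univ : Finset Ω)) {T : Finset Ω}
    (hT : T.Nonempty) (hc : ¬ crossed X T) : ∃ P ∈ X.parts, T ⊆ P := by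
  obtain ⟨ω, hω⟩ := hT
  obtain ⟨P, hP, hωP⟩ := X.exists_mem (Finset.mem_univ ω)
  refine ⟨P, hP, fun ω' hω' => ?_⟩
  obtain ⟨Q, hQ, hQ'⟩ := X.exists_mem (Finset.mem_univ ω')
  by_contra h'
  exact hc ⟨P, hP, Q, hQ, fun hPQ => h' (hPQ ▸ hQ'),
    ⟨ω, Finset.mem_inter.2 ⟨hω, hωP⟩⟩, ⟨ω', Finset.mem_inter.2 ⟨hω', hQ'⟩⟩⟩

lemma part_unique (X : Finpartition (univ : Finset Ω)) {P Q T : Finset Ω}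
    (hP : P ∈ X.parts) (hQ : Q ∈ X.parts) (hT : T.Nonempty)
    (h1 : T ⊆ P) (h2 : T ⊆ Q) : P = Q :=
  X.eq_of_mem_parts hP hQ (h1 hT.choose_spec) (h2 hT.choose_spec)

lemma not_crossed_of_subset (X : Finpartition (univ : Finset Ω)) {P T : Finset Ω}
    (hP : P ∈ X.parts) (hTP : T ⊆ P) : ¬ crossed X T := by
  rintro ⟨P1, hP1, P2, hP2, hne, ⟨a, ha⟩, ⟨b, hb⟩⟩
  simp only [Finset.mem_inter] at ha hb
  have h1 : P1 = P := X.eq_of_mem_parts hP1 hP ha.2 (hTP ha.1)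
  have h2 : P2 = P := X.eq_of_mem_parts hP2 hP hb.2 (hTP hb.1)
  exact hne (h1.trans h2.symm)

section Main
variable (p : Ω → ℝ) (X Y : Finpartition (univ : Finset Ω))

/-- The parts of `Y` lying inside a given part `P` of `X`. -/
noncomputable def YP (P : Finset Ω) : Finset (Finset Ω) := Y.parts.filter (· ⊆ P)

lemma YP_disjoint : Set.PairwiseDisjoint (↑X.parts) (YP Y) := by
  intro P hP P' hP' hne
  apply Finset.disjoint_left.2
  intro Q hQ hQ'
  simp only [YP, Finset.mem_filter] at hQ hQ'
  exact hne (part_unique X hP hP' (Y.nonempty_of_mem_parts hQ.1) hQ.2 hQ'.2)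

lemma biUnion_YP (h : refines Y X) : X.parts.biUnion (YP Y) = Y.parts := by
  ext Q
  simp only [Finset.mem_biUnion, YP, Finset.mem_filter]
  constructor
  · rintro ⟨P, -, hQ, -⟩; exact hQ
  · intro hQ
    obtain ⟨P, hP, hQP⟩ := h Q hQ
    exact ⟨P, hP, hQ, hQP⟩

lemma part_eq_biUnion (h : refines Y X) {P : Finset Ω} (hP : P ∈ X.parts) :
    P = (YP Y P).biUnion id := by
  ext ω
  simp only [Finset.mem_biUnion, YP, Finset.mem_filter, id]
  constructor
  · intro hω
    obtain ⟨Q, hQ, hωQ⟩ := Y.exists_mem (Finset.mem_univ ω)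
    obtain ⟨P', hP', hQP'⟩ := h Q hQ
    have : P' = P := X.eq_of_mem_parts hP' hP (hQP' hωQ) hω
    exact ⟨Q, ⟨hQ, this ▸ hQP'⟩, hωQ⟩
  · rintro ⟨Q, ⟨-, hQP⟩, hωQ⟩
    exact hQP hωQ

lemma pS_part (h : refines Y X) {P : Finset Ω} (hP : P ∈ X.parts) :
    pS p P = ∑ Q ∈ YP Y P, pS p Q := by
  have hd : Set.PairwiseDisjoint (↑(YP Y P)) (id : Finset Ω → Finset Ω) := by
    intro Q hQ Q' hQ' hne
    simp only [YP, Finset.coe_filter, Set.mem_setOf_eq] at hQ hQ'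
    exact Y.disjoint hQ.1 hQ'.1 hne
  calc pS p P = ∑ ω ∈ (YP Y P).biUnion id, p ω := by
        rw [← part_eq_biUnion X Y h hP]; rfl
    _ = ∑ Q ∈ YP Y P, ∑ ω ∈ Q, p ω := Finset.sum_biUnion hd
    _ = ∑ Q ∈ YP Y P, pS p Q := rfl

/-- nonempty subsets of `P` with at least 2 elements. -/
noncomputable def big (P : Finset Ω) : Finset (Finset Ω) :=
  P.powerset.filter (fun T => 2 ≤ T.card)

lemma sum_mu_big {P : Finset Ω} :
    ∑ T ∈ big P, mu p T = plog p P - ∑ ω ∈ P, plog p {ω} := by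
  have hsplit := Finset.sum_filter_add_sum_filter_not (P.powerset.filter (· ≠ ∅))
    (fun T => T.card = 1) (mu p)
  have h2 : (P.powerset.filter (· ≠ ∅)).filter (fun T => ¬ T.card = 1) = big P := by
    ext T
    simp only [Finset.mem_filter, Finset.mem_powerset, big]
    constructor
    · rintro ⟨⟨hTP, hTne⟩, hc⟩
      refine ⟨hTP, ?_⟩
      have h0 : T.card ≠ 0 := fun h0 => hTne (Finset.card_eq_zero.1 h0)
      omega
    · rintro ⟨hTP, hc⟩
      refine ⟨⟨hTP, ?_⟩, by omega⟩
      intro h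
      rw [h] at hc
      simp at hc
  rw [h2, sum_card_one, mobius] at hsplit
  linarith

lemma big_uncrossed (h : refines Y X) {P : Finset Ω} (hP : P ∈ X.parts) :
    (big P).filter (fun T => ¬ crossed Y T) = (YP Y P).biUnion big := by
  ext T
  simp only [Finset.mem_filter, big, Finset.mem_powerset, Finset.mem_biUnion, YP]
  constructor
  · rintro ⟨⟨hTP, hcard⟩, hc⟩
    have hTne : T.Nonempty := Finset.card_pos.1 (by omega)
    obtain ⟨Q, hQ, hTQ⟩ := subset_part_of_not_crossed Y hTne hc
    obtain ⟨P', hP', hQP'⟩ := h Q hQ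
    have : P' = P := part_unique X hP' hP hTne (hTQ.trans hQP') hTP
    exact ⟨Q, ⟨hQ, by rw [← this]; exact hQP'⟩, hTQ, hcard⟩
  · rintro ⟨Q, hQ, hTQ, hcard⟩
    exact ⟨⟨hTQ.trans hQ.2, hcard⟩, not_crossed_of_subset Y hQ.1 hTQ⟩

lemma big_disjoint {S : Finset (Finset Ω)}
    (hd : Set.PairwiseDisjoint (↑S : Set (Finset Ω)) (id : Finset Ω → Finset Ω)) :
    Set.PairwiseDisjoint (↑S : Set (Finset Ω)) big := by
  intro Q hQ Q' hQ' hne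
  apply Finset.disjoint_left.2
  intro T hT hT'
  simp only [big, Finset.mem_filter, Finset.mem_powerset] at hT hT'
  have hTne : T.Nonempty := Finset.card_pos.1 (by omega)
  obtain ⟨a, ha⟩ := hTne
  exact Finset.disjoint_left.1 (hd hQ hQ' hne) (hT.1 ha) (hT'.1 ha)

/-- key per-part identity. -/
lemma key_identity (h : refines Y X) {P : Finset Ω} (hP : P ∈ X.parts) :
    ∑ T ∈ (big P).filter (crossed Y), mu p T = plog p P - ∑ Q ∈ YP Y P, plog p Q := by
  have hYPd : Set.PairwiseDisjoint (↑(YP Y P)) (id : Finset Ω → Finset Ω) := by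
    intro Q hQ Q' hQ' hne
    simp only [YP, Finset.coe_filter, Set.mem_setOf_eq] at hQ hQ'
    exact Y.disjoint hQ.1 hQ'.1 hne
  have hsplit := Finset.sum_filter_add_sum_filter_not (big P) (crossed Y) (mu p)
  have h1 : ∑ T ∈ (big P).filter (fun T => ¬ crossed Y T), mu p T
      = ∑ Q ∈ YP Y P, (plog p Q - ∑ ω ∈ Q, plog p {ω}) := by
    rw [big_uncrossed X Y h hP, Finset.sum_biUnion (big_disjoint hYPd)]
    exact Finset.sum_congr rfl fun Q _ => sum_mu_big p
  have h2 : ∑ Q ∈ YP Y P, ∑ ω ∈ Q, plog p {ω} = ∑ ω ∈ P, plog p {ω} := by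
    conv_rhs => rw [part_eq_biUnion X Y h hP]
    rw [Finset.sum_biUnion hYPd]
    rfl
  have h3 := sum_mu_big p (P := P)
  rw [h1, Finset.sum_sub_distrib, h2] at hsplit
  linarith

lemma content_sdiff_eq (h : refines Y X) :
    content Y \ content X = X.parts.biUnion (fun P => (big P).filter (crossed Y)) := by
  ext T
  simp only [Finset.mem_sdiff, content, Finset.mem_filter, Finset.mem_univ, true_and,
    Finset.mem_biUnion, big, Finset.mem_powerset]
  constructor
  · rintro ⟨⟨hcard, hcY⟩, hcX⟩
    have hncX : ¬ crossed X T := fun hc => hcX ⟨hcard, hc⟩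
    have hTne : T.Nonempty := Finset.card_pos.1 (by omega)
    obtain ⟨P, hP, hTP⟩ := subset_part_of_not_crossed X hTne hncX
    exact ⟨P, hP, ⟨hTP, hcard⟩, hcY⟩
  · rintro ⟨P, hP, ⟨hTP, hcard⟩, hcY⟩
    exact ⟨⟨hcard, hcY⟩, fun hc => not_crossed_of_subset X hP hTP hc.2⟩

lemma muSet_eq (h : refines Y X) :
    muSet p (content Y \ content X) = Hent p Y - Hent p X := by
  have hXd : Set.PairwiseDisjoint (↑X.parts) (fun P => (big P).filter (crossed Y)) := by
    intro P hP P' hP' hne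
    have := big_disjoint (S := X.parts) X.disjoint hP hP' hne
    exact (this.mono (Finset.filter_subset _ _) (Finset.filter_subset _ _))
  rw [muSet, content_sdiff_eq X Y h, Finset.sum_biUnion hXd]
  have : ∑ P ∈ X.parts, ∑ T ∈ (big P).filter (crossed Y), mu p T
      = ∑ P ∈ X.parts, (plog p P - ∑ Q ∈ YP Y P, plog p Q) :=
    Finset.sum_congr rfl fun P hP => key_identity p X Y h hP
  rw [this, Finset.sum_sub_distrib]
  have hY : ∑ P ∈ X.parts, ∑ Q ∈ YP Y P, plog p Q = ∑ Q ∈ Y.parts, plog p Q := by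
    rw [← biUnion_YP X Y h, Finset.sum_biUnion (YP_disjoint X Y)]
  rw [hY]
  simp only [Hent, plog]
  ring

end Main

lemma sum_mul_log_le {α : Type*} (s : Finset α) (f : α → ℝ) (hf : ∀ a ∈ s, 0 ≤ f a) :
    ∑ a ∈ s, f a * Real.log (f a) ≤ (∑ a ∈ s, f a) * Real.log (∑ a ∈ s, f a) := by
  rw [Finset.sum_mul]
  refine Finset.sum_le_sum fun a ha => ?_
  rcases (hf a ha).eq_or_lt with h | h
  · simp [← h]
  · exact mul_le_mul_of_nonneg_left
      (Real.log_le_log h (Finset.single_le_sum hf ha)) h.le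

theorem muSet_sdiff_nonneg_of_refines {Ω : Type*} [Fintype Ω] [DecidableEq Ω] (p : Ω → ℝ)
    (hp : ∀ ω, 0 ≤ p ω) (hsum : ∑ ω, p ω = 1)
    (X Y : Finpartition (univ : Finset Ω)) (h : refines Y X) :
    0 ≤ muSet p (content Y \ content X) ∧ Hent p X ≤ Hent p Y := by
  have hH : Hent p X ≤ Hent p Y := by
    simp only [Hent, neg_le_neg_iff]
    rw [← biUnion_YP X Y h, Finset.sum_biUnion (YP_disjoint X Y)]
    refine Finset.sum_le_sum fun P hP => ?_
    have hpq : ∀ Q ∈ YP Y P, 0 ≤ pS p Q := fun Q _ => Finset.sum_nonneg fun ω _ => hp ω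
    have := sum_mul_log_le (YP Y P) (pS p) hpq
    rwa [← pS_part p X Y h hP] at this
  exact ⟨by rw [muSet_eq p X Y h]; linarith, hH⟩
end

section
/- Let R be a set of atoms of Ω. If partitions Z₁ and Z₂ satisfy ΔZ₁ ⊆ R and ΔZ₂ ⊆ R, then Δ(Z₁ ∨ Z₂) ⊆ R. Consequently, among all partitions Z with ΔZ ⊆ R there is a unique one whose content is maximal (it refines all others), so the maximal representable subset Rep(R) ⊆ R is well defined. -/
open Finset BigOperators

variable {Ω : Type*} [Fintype Ω] [DecidableEq Ω]

open scoped Classical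

lemma mem_content {X : Finpartition (univ : Finset Ω)} {S : Finset Ω} :
    S ∈ content X ↔ 2 ≤ S.card ∧ crossed X S := by
  simp [content]

/-- content is antitone: if `X` refines `Z`, then `content Z ⊆ content X`. -/
lemma content_antitone {X Z : Finpartition (univ : Finset Ω)} (h : X ≤ Z) :
    content Z ⊆ content X := by
  intro S hS
  rw [mem_content] at hS ⊢
  obtain ⟨hcard, P, hP, Q, hQ, hPQ, ⟨a, ha⟩, ⟨b, hb⟩⟩ := hS
  simp only [mem_inter] at ha hb
  refine ⟨hcard, X.part a, X.part_mem.2 (mem_univ a), X.part b, X.part_mem.2 (mem_univ b), ?_,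
    ⟨a, mem_inter.2 ⟨ha.1, X.mem_part (mem_univ a)⟩⟩,
    ⟨b, mem_inter.2 ⟨hb.1, X.mem_part (mem_univ b)⟩⟩⟩
  -- parts of X containing a and b sit inside P and Q respectively
  obtain ⟨P', hP', haP'⟩ := h (X.part_mem.2 (mem_univ a))
  obtain ⟨Q', hQ', hbQ'⟩ := h (X.part_mem.2 (mem_univ b))
  have hPP' : P' = P := Z.eq_of_mem_parts hP' hP (haP' (X.mem_part (mem_univ a))) ha.2
  have hQQ' : Q' = Q := Z.eq_of_mem_parts hQ' hQ (hbQ' (X.mem_part (mem_univ b))) hb.2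
  intro hcon
  apply hPQ
  have hbP : b ∈ P := hPP' ▸ haP' (hcon ▸ X.mem_part (mem_univ b))
  exact Z.eq_of_mem_parts hP hQ hbP hb.2

/-- If `content Z ⊆ content Z'` then `Z'` refines `Z`. -/
lemma le_of_content_subset {Z Z' : Finpartition (univ : Finset Ω)}
    (h : content Z ⊆ content Z') : Z' ≤ Z := by
  intro P hP
  obtain ⟨a, ha⟩ := Z'.nonempty_of_mem_parts hP
  refine ⟨Z.part a, Z.part_mem.2 (mem_univ a), fun b hb => ?_⟩
  by_contra hbQ
  have hab : a ≠ b := by rintro rfl; exact hbQ (Z.mem_part (mem_univ a))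
  have hS : ({a, b} : Finset Ω) ∈ content Z := by
    rw [mem_content]
    refine ⟨by rw [card_insert_of_notMem (by simpa using hab), card_singleton], ?_⟩
    refine ⟨Z.part a, Z.part_mem.2 (mem_univ a), Z.part b, Z.part_mem.2 (mem_univ b), ?_,
      ⟨a, mem_inter.2 ⟨by simp, Z.mem_part (mem_univ a)⟩⟩,
      ⟨b, mem_inter.2 ⟨by simp, Z.mem_part (mem_univ b)⟩⟩⟩
    rintro hcon
    exact hbQ (hcon ▸ Z.mem_part (mem_univ b))
  have hS' := h hS
  rw [mem_content] at hS'
  obtain ⟨-, P₁, hP₁, P₂, hP₂, hP₁₂, ⟨x, hx⟩, ⟨y, hy⟩⟩ := hS'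
  simp only [mem_inter, mem_insert, mem_singleton] at hx hy
  have hxP : x ∈ P := by rcases hx.1 with rfl | rfl; exacts [ha, hb]
  have hyP : y ∈ P := by rcases hy.1 with rfl | rfl; exacts [ha, hb]
  exact hP₁₂ ((Z'.eq_of_mem_parts hP₁ hP hx.2 hxP).trans
    (Z'.eq_of_mem_parts hP hP₂ hyP hy.2))

lemma content_inf_subset {Z₁ Z₂ : Finpartition (univ : Finset Ω)} :
    content (Z₁ ⊓ Z₂) ⊆ content Z₁ ∪ content Z₂ := by
  intro S hS
  rw [mem_content] at hS
  obtain ⟨hcard, A, hA, B, hB, hAB, ⟨a, ha⟩, ⟨b, hb⟩⟩ := hS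
  rw [Finpartition.parts_inf, mem_erase, mem_image] at hA hB
  obtain ⟨-, ⟨⟨P₁, Q₁⟩, hPQ₁, rfl⟩⟩ := hA
  obtain ⟨-, ⟨⟨P₂, Q₂⟩, hPQ₂, rfl⟩⟩ := hB
  rw [mem_product] at hPQ₁ hPQ₂
  simp only [mem_inter, Finset.inf_eq_inter] at ha hb ⊢
  have hne : P₁ ≠ P₂ ∨ Q₁ ≠ Q₂ := by
    by_contra hc
    push_neg at hc
    exact hAB (by rw [hc.1, hc.2])
  rcases hne with hne | hne
  · refine mem_union_left _ (mem_content.2 ⟨hcard, P₁, hPQ₁.1, P₂, hPQ₂.1, hne,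
      ⟨a, mem_inter.2 ⟨ha.1, ha.2.1⟩⟩, ⟨b, mem_inter.2 ⟨hb.1, hb.2.1⟩⟩⟩)
  · refine mem_union_right _ (mem_content.2 ⟨hcard, Q₁, hPQ₁.2, Q₂, hPQ₂.2, hne,
      ⟨a, mem_inter.2 ⟨ha.1, ha.2.2⟩⟩, ⟨b, mem_inter.2 ⟨hb.1, hb.2.2⟩⟩⟩)

lemma content_top : content (⊤ : Finpartition (univ : Finset Ω)) = ∅ := by
  ext S
  simp only [mem_content, notMem_empty, iff_false, not_and]
  rintro - ⟨P, hP, Q, hQ, hPQ, -⟩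
  exact hPQ ((mem_singleton.1 (Finpartition.parts_top_subset _ hP)).trans
    (mem_singleton.1 (Finpartition.parts_top_subset _ hQ)).symm)

theorem rep_well_defined {Ω : Type*} [Fintype Ω] [DecidableEq Ω]
    (R : Finset (Finset Ω)) :
    (∀ Z₁ Z₂ : Finpartition (univ : Finset Ω),
        content Z₁ ⊆ R → content Z₂ ⊆ R → content (Z₁ ⊓ Z₂) ⊆ R) ∧
    (∃! Z : Finpartition (univ : Finset Ω),
        content Z ⊆ R ∧
          ∀ W : Finpartition (univ : Finset Ω), content W ⊆ R → content W ⊆ content Z) := by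
  classical
  have part1 : ∀ Z₁ Z₂ : Finpartition (univ : Finset Ω),
      content Z₁ ⊆ R → content Z₂ ⊆ R → content (Z₁ ⊓ Z₂) ⊆ R := fun Z₁ Z₂ h₁ h₂ =>
    content_inf_subset.trans (union_subset h₁ h₂)
  refine ⟨part1, ?_⟩
  -- pick a partition with content ⊆ R of maximal content cardinality
  have hS : ((Finset.univ : Finset (Finpartition (univ : Finset Ω))).filter
      (fun Z => content Z ⊆ R)).Nonempty :=
    ⟨⊤, mem_filter.2 ⟨mem_univ _, by rw [content_top]; exact empty_subset R⟩⟩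
  obtain ⟨Z, hZmem, hZmax⟩ := Finset.exists_max_image _ (fun Z => (content Z).card) hS
  have hZR : content Z ⊆ R := (mem_filter.1 hZmem).2
  have hmax : ∀ W : Finpartition (univ : Finset Ω), content W ⊆ R →
      content W ⊆ content Z := by
    intro W hW
    have hinf : content (Z ⊓ W) ⊆ R := part1 Z W hZR hW
    have h1 : content Z ⊆ content (Z ⊓ W) := content_antitone inf_le_left
    have h2 : content W ⊆ content (Z ⊓ W) := content_antitone inf_le_right
    have hcard : (content (Z ⊓ W)).card ≤ (content Z).card :=
      hZmax _ (mem_filter.2 ⟨mem_univ _, hinf⟩)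
    have heq : content (Z ⊓ W) = content Z := Finset.eq_of_subset_of_card_le h1 hcard |>.symm
    rw [← heq]; exact h2
  refine ⟨Z, ⟨hZR, hmax⟩, ?_⟩
  rintro Z' ⟨hZ'R, hmax'⟩
  exact le_antisymm (le_of_content_subset (hmax' Z hZR)) (le_of_content_subset (hmax Z' hZ'R))
end

section
/- A set R of atoms of Ω is representable (R = ΔZ for some partition Z) if and only if (i) the relation ω ~ ω′ defined by 'ω = ω′ or {ω, ω′} ∉ R' is an equivalence relation on Ω, and (ii) for every S with |S| ≥ 2, S ∈ R if and only if there exist ω, ω′ ∈ S with {ω, ω′} ∈ R. -/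
open Finset BigOperators

variable {Ω : Type*} [Fintype Ω] [DecidableEq Ω]

section Aux
variable {Ω : Type*} [Fintype Ω] [DecidableEq Ω]

lemma mem_content_iff (Z : Finpartition (univ : Finset Ω)) (S : Finset Ω) :
    S ∈ content Z ↔ 2 ≤ S.card ∧ crossed Z S := by
  simp [content]

lemma crossed_iff_parts (Z : Finpartition (univ : Finset Ω)) (S : Finset Ω) :
    crossed Z S ↔ ∃ a ∈ S, ∃ b ∈ S, Z.part a ≠ Z.part b := by
  constructor
  · rintro ⟨P, hP, Q, hQ, hPQ, ⟨a, ha⟩, ⟨b, hb⟩⟩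
    simp only [mem_inter] at ha hb
    exact ⟨a, ha.1, b, hb.1, by
      rw [Z.part_eq_of_mem hP ha.2, Z.part_eq_of_mem hQ hb.2]; exact hPQ⟩
  · rintro ⟨a, ha, b, hb, hab⟩
    exact ⟨Z.part a, Z.part_mem.2 (mem_univ a), Z.part b, Z.part_mem.2 (mem_univ b), hab,
      ⟨a, mem_inter.2 ⟨ha, Z.mem_part (mem_univ a)⟩⟩,
      ⟨b, mem_inter.2 ⟨hb, Z.mem_part (mem_univ b)⟩⟩⟩

lemma pair_crossed_iff (Z : Finpartition (univ : Finset Ω)) (a b : Ω) :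
    crossed Z ({a, b} : Finset Ω) ↔ Z.part a ≠ Z.part b := by
  rw [crossed_iff_parts]
  constructor
  · rintro ⟨x, hx, y, hy, hxy⟩
    simp only [mem_insert, mem_singleton] at hx hy
    rcases hx with rfl | rfl <;> rcases hy with rfl | rfl <;> first | exact hxy | exact absurd rfl hxy | exact (hxy ·.symm)
  · intro h
    exact ⟨a, by simp, b, by simp, h⟩

lemma pair_mem_content_iff (Z : Finpartition (univ : Finset Ω)) {a b : Ω} (hab : a ≠ b) :
    ({a, b} : Finset Ω) ∈ content Z ↔ Z.part a ≠ Z.part b := by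
  rw [mem_content_iff, pair_crossed_iff]
  simp [card_insert_of_notMem, hab]

end Aux

theorem representable_iff {Ω : Type*} [Fintype Ω] [DecidableEq Ω]
    (R : Finset (Finset Ω)) (hR : ∀ S ∈ R, 2 ≤ S.card) :
    (∃ Z : Finpartition (univ : Finset Ω), content Z = R) ↔
      (Equivalence (fun a b : Ω => a = b ∨ ({a, b} : Finset Ω) ∉ R) ∧
        ∀ S : Finset Ω, 2 ≤ S.card →
          (S ∈ R ↔ ∃ a ∈ S, ∃ b ∈ S, ({a, b} : Finset Ω) ∈ R)) := by
  constructor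
  · rintro ⟨Z, rfl⟩
    have key : ∀ a b : Ω, (a = b ∨ ({a, b} : Finset Ω) ∉ content Z) ↔ Z.part a = Z.part b := by
      intro a b
      by_cases hab : a = b
      · simp [hab]
      · rw [pair_mem_content_iff Z hab]; simp [hab]
    constructor
    · constructor
      · intro a; rw [key]
      · intro a b h; rw [key] at h ⊢; exact h.symm
      · intro a b c h1 h2; rw [key] at h1 h2 ⊢; exact h1.trans h2
    · intro S hS
      rw [mem_content_iff, crossed_iff_parts]
      constructor
      · rintro ⟨_, a, ha, b, hb, hab⟩
        have hne : a ≠ b := fun h => hab (by rw [h])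
        exact ⟨a, ha, b, hb, (pair_mem_content_iff Z hne).2 hab⟩
      · rintro ⟨a, ha, b, hb, hmem⟩
        have hne : a ≠ b := by
          rintro rfl
          have := hR _ hmem
          simp at this
        exact ⟨hS, a, ha, b, hb, (pair_mem_content_iff Z hne).1 hmem⟩
  · rintro ⟨hEq, hii⟩
    classical
    let s : Setoid Ω := ⟨fun a b => a = b ∨ ({a, b} : Finset Ω) ∉ R, hEq⟩
    refine ⟨Finpartition.ofSetoid s, ?_⟩
    set Z := Finpartition.ofSetoid s with hZ
    have hpart : ∀ a b : Ω, Z.part a = Z.part b ↔ (a = b ∨ ({a, b} : Finset Ω) ∉ R) := by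
      intro a b
      rw [← Z.mem_part_iff_part_eq_part (mem_univ a) (mem_univ b), hZ,
        Finpartition.mem_part_ofSetoid_iff_rel]
      exact ⟨fun h => hEq.symm h, fun h => hEq.symm h⟩
    ext S
    rw [mem_content_iff, crossed_iff_parts]
    constructor
    · rintro ⟨hS, a, ha, b, hb, hab⟩
      rw [Ne, hpart] at hab
      push_neg at hab
      exact (hii S hS).2 ⟨a, ha, b, hb, hab.2⟩
    · intro hSR
      have hS := hR S hSR
      obtain ⟨a, ha, b, hb, hmem⟩ := (hii S hS).1 hSR
      have hne : a ≠ b := by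
        rintro rfl
        have := hR _ hmem
        simp at this
      refine ⟨hS, a, ha, b, hb, ?_⟩
      rw [Ne, hpart]
      push_neg
      exact ⟨hne, hmem⟩
end

section
/- For partitions X₁, …, Xₙ of Ω, the total correlation TC := Σᵢ H(Xᵢ) − H(X₁∨⋯∨Xₙ) equals Σᵢ μ(ΔXᵢ) − μ(∪ᵢ ΔXᵢ); in particular TC is the measure, counted with multiplicity, of atoms crossed by more than one of the Xᵢ: TC = Σ_{S} (c(S) − 1)·μ(S) where the sum is over atoms S crossed by at least one Xᵢ and c(S) = #{i : S ∈ ΔXᵢ}. -/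
open Finset BigOperators

variable {Ω : Type*} [Fintype Ω] [DecidableEq Ω]

section Aux
open scoped Classical
variable {Ω : Type*} [Fintype Ω] [DecidableEq Ω]

lemma alt_sum (T P : Finset Ω) (hTP : T ⊆ P) :
    ∑ S ∈ P.powerset.filter (fun S => T ⊆ S), (-1:ℝ)^(S.card - T.card)
      = if P = T then 1 else 0 := by
  have := Finset.sum_nbij' (s := P.powerset.filter (fun S => T ⊆ S))
    (t := (P \ T).powerset)
    (f := fun S => (-1:ℝ)^(S.card - T.card)) (g := fun U => (-1:ℝ)^U.card)
    (i := fun S => S \ T) (j := fun U => U ∪ T)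
    (fun S hS => by
      simp only [mem_filter, mem_powerset] at hS ⊢
      exact sdiff_subset_sdiff hS.1 Subset.rfl)
    (fun U hU => by
      simp only [mem_powerset] at hU
      simp only [mem_filter, mem_powerset]
      exact ⟨union_subset (hU.trans sdiff_subset) hTP, subset_union_right⟩)
    (fun S hS => by
      simp only [mem_filter, mem_powerset] at hS
      exact sdiff_union_of_subset hS.2)
    (fun U hU => by
      simp only [mem_powerset] at hU
      have hd : Disjoint U T := disjoint_of_subset_left hU sdiff_disjoint
      beta_reduce
      rw [union_sdiff_distrib, sdiff_self, hd.sdiff_eq_left]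
      simp)
    (fun S hS => by
      simp only [mem_filter, mem_powerset] at hS
      beta_reduce
      rw [card_sdiff_of_subset hS.2])
  rw [this]
  have : ∑ U ∈ (P \ T).powerset, (-1:ℝ)^U.card
      = ((∑ U ∈ (P \ T).powerset, (-1:ℤ)^U.card : ℤ) : ℝ) := by push_cast; rfl
  rw [this, Finset.sum_powerset_neg_one_pow_card]
  by_cases h : P = T
  · simp [h]
  · have : P \ T ≠ ∅ := by
      rw [Ne, sdiff_eq_empty_iff_subset]
      exact fun hsub => h (Subset.antisymm hsub hTP)
    simp [h, this]

lemma crossed_iff_part (X : Finpartition (univ : Finset Ω)) (S : Finset Ω) :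
    crossed X S ↔ ∃ a ∈ S, ∃ b ∈ S, X.part a ≠ X.part b := by
  constructor
  · rintro ⟨P, hP, Q, hQ, hPQ, ⟨a, ha⟩, ⟨b, hb⟩⟩
    rw [mem_inter] at ha hb
    refine ⟨a, ha.1, b, hb.1, ?_⟩
    rw [X.part_eq_of_mem hP ha.2, X.part_eq_of_mem hQ hb.2]
    exact hPQ
  · rintro ⟨a, ha, b, hb, hab⟩
    exact ⟨X.part a, X.part_mem.2 (mem_univ a), X.part b, X.part_mem.2 (mem_univ b), hab,
      ⟨a, mem_inter.2 ⟨ha, X.mem_part (mem_univ a)⟩⟩,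
      ⟨b, mem_inter.2 ⟨hb, X.mem_part (mem_univ b)⟩⟩⟩

lemma crossed.two_le_card {X : Finpartition (univ : Finset Ω)} {S : Finset Ω}
    (h : crossed X S) : 2 ≤ S.card := by
  obtain ⟨a, ha, b, hb, hab⟩ := (crossed_iff_part X S).1 h
  rw [Nat.succ_le_iff, Finset.one_lt_card]
  exact ⟨a, ha, b, hb, fun h => hab (by rw [h])⟩

lemma not_crossed_iff {X : Finpartition (univ : Finset Ω)} {S : Finset Ω}
    (hS : S.Nonempty) : ¬ crossed X S ↔ ∃ P ∈ X.parts, S ⊆ P := by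
  obtain ⟨a, ha⟩ := hS
  constructor
  · intro h
    refine ⟨X.part a, X.part_mem.2 (mem_univ a), fun b hb => ?_⟩
    by_contra hbP
    rw [crossed_iff_part] at h
    push_neg at h
    exact hbP (h a ha b hb ▸ X.mem_part (mem_univ b))
  · rintro ⟨P, hP, hSP⟩ ⟨P', hP', Q', hQ', hne, ⟨x, hx⟩, ⟨y, hy⟩⟩
    rw [mem_inter] at hx hy
    have h1 : P = P' := X.eq_of_mem_parts hP hP' (hSP hx.1) hx.2
    have h2 : P = Q' := X.eq_of_mem_parts hP hQ' (hSP hy.1) hy.2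
    exact hne (h1 ▸ h2)

lemma coeff (X : Finpartition (univ : Finset Ω)) {T : Finset Ω} (hT : T.Nonempty) :
    ∑ S ∈ (content X).filter (fun S => T ⊆ S), (-1:ℝ)^(S.card - T.card)
      = (if T = (univ : Finset Ω) then 1 else 0) - (if T ∈ X.parts then 1 else 0) := by
  set A : Finset (Finset Ω) := (univ : Finset Ω).powerset.filter (fun S => T ⊆ S) with hA
  have h1 : ∑ S ∈ A, (-1:ℝ)^(S.card - T.card) = if T = (univ : Finset Ω) then 1 else 0 := by
    rw [alt_sum T univ (subset_univ T)]
    simp [eq_comm]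
  have hsplit := Finset.sum_filter_add_sum_filter_not A
    (fun S => 2 ≤ S.card ∧ crossed X S) (fun S => (-1:ℝ)^(S.card - T.card))
  have hAc : A.filter (fun S => 2 ≤ S.card ∧ crossed X S)
      = (content X).filter (fun S => T ⊆ S) := by
    ext S
    simp only [hA, content, mem_filter, mem_powerset, mem_univ, subset_univ, true_and]
    tauto
  have hBc : ∑ S ∈ A.filter (fun S => ¬ (2 ≤ S.card ∧ crossed X S)),
      (-1:ℝ)^(S.card - T.card) = if T ∈ X.parts then 1 else 0 := by
    by_cases hex : ∃ P ∈ X.parts, T ⊆ P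
    · obtain ⟨P, hP, hTP⟩ := hex
      have hB : A.filter (fun S => ¬ (2 ≤ S.card ∧ crossed X S))
          = P.powerset.filter (fun S => T ⊆ S) := by
        ext S
        simp only [hA, mem_filter, mem_powerset, mem_univ, subset_univ, true_and]
        constructor
        · rintro ⟨hTS, hnc⟩
          have hSne : S.Nonempty := hT.mono hTS
          have hnc' : ¬ crossed X S := fun hc => hnc ⟨hc.two_le_card, hc⟩
          obtain ⟨Q, hQ, hSQ⟩ := (not_crossed_iff hSne).1 hnc'
          obtain ⟨a, haT⟩ := hT
          have : P = Q := X.eq_of_mem_parts hP hQ (hTP haT) (hSQ (hTS haT))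
          exact ⟨this ▸ hSQ, hTS⟩
        · rintro ⟨hSP, hTS⟩
          refine ⟨hTS, fun hc => ?_⟩
          have hSne : S.Nonempty := hT.mono hTS
          exact ((not_crossed_iff hSne).2 ⟨P, hP, hSP⟩) hc.2
      rw [hB, alt_sum T P hTP]
      have : P = T ↔ T ∈ X.parts := by
        constructor
        · rintro rfl; exact hP
        · intro hTparts
          obtain ⟨a, haT⟩ := hT
          exact X.eq_of_mem_parts hP hTparts (hTP haT) haT
      simp [this]
    · have hB : A.filter (fun S => ¬ (2 ≤ S.card ∧ crossed X S)) = ∅ := by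
        rw [Finset.filter_eq_empty_iff]
        intro S hS
        simp only [hA, mem_filter, mem_powerset] at hS
        intro hnc
        have hSne : S.Nonempty := hT.mono hS.2
        have hnc' : ¬ crossed X S := fun hc => hnc ⟨hc.two_le_card, hc⟩
        obtain ⟨Q, hQ, hSQ⟩ := (not_crossed_iff hSne).1 hnc'
        exact hex ⟨Q, hQ, hS.2.trans hSQ⟩
      have hTparts : T ∉ X.parts := fun h => hex ⟨T, h, Subset.rfl⟩
      rw [hB, Finset.sum_empty]
      simp [hTparts]
  rw [hAc, hBc, h1] at hsplit
  linarith

lemma muSet_content (p : Ω → ℝ) (hsum : ∑ ω, p ω = 1) (X : Finpartition (univ : Finset Ω)) :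
    muSet p (content X) = Hent p X := by
  have huniv : (univ : Finset Ω).Nonempty := by
    rw [← Finset.card_pos]
    by_contra h
    push_neg at h
    interval_cases h' : (univ : Finset Ω).card
    · rw [Finset.card_eq_zero] at h'
      rw [show (∑ ω, p ω) = ∑ ω ∈ (univ : Finset Ω), p ω from rfl, h'] at hsum
      simp at hsum
  set F : Finset (Finset Ω) := (univ : Finset Ω).powerset.filter (· ≠ ∅) with hF
  have swap : muSet p (content X)
      = ∑ T ∈ F, ∑ S ∈ (content X).filter (fun S => T ⊆ S),
          (-1:ℝ)^(S.card - T.card) * plog p T := by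
    unfold muSet mu
    refine Finset.sum_comm' ?_
    intro S T
    simp only [hF, mem_filter, mem_powerset, subset_univ, true_and]
    tauto
  rw [swap]
  have : ∀ T ∈ F, ∑ S ∈ (content X).filter (fun S => T ⊆ S),
      (-1:ℝ)^(S.card - T.card) * plog p T
      = ((if T = (univ : Finset Ω) then 1 else 0) - (if T ∈ X.parts then 1 else 0)) * plog p T := by
    intro T hTF
    rw [← Finset.sum_mul, coeff X]
    rw [hF, mem_filter] at hTF
    exact Finset.nonempty_iff_ne_empty.2 hTF.2
  rw [Finset.sum_congr rfl this]
  have expand : ∀ T : Finset Ω,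
      ((if T = (univ : Finset Ω) then 1 else 0) - (if T ∈ X.parts then (1:ℝ) else 0)) * plog p T
      = (if T = (univ : Finset Ω) then plog p T else 0) - (if T ∈ X.parts then plog p T else 0) := by
    intro T
    by_cases h1 : T = (univ : Finset Ω) <;> by_cases h2 : T ∈ X.parts <;> subst_vars <;> simp [*]
  rw [Finset.sum_congr rfl (fun T _ => expand T), Finset.sum_sub_distrib]
  have e1 : ∑ T ∈ F, (if T = (univ : Finset Ω) then plog p T else 0) = plog p univ := by
    rw [Finset.sum_ite_eq' F (univ : Finset Ω) (plog p)]
    have : (univ : Finset Ω) ∈ F := by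
      simp [hF, ← Finset.nonempty_iff_ne_empty, huniv]
    simp [this]
  have e2 : ∑ T ∈ F, (if T ∈ X.parts then plog p T else 0) = ∑ T ∈ X.parts, plog p T := by
    rw [← Finset.sum_filter]
    congr 1
    ext T
    simp only [hF, mem_filter, mem_powerset, subset_univ, true_and]
    constructor
    · tauto
    · intro h
      exact ⟨X.ne_bot h, h⟩
  rw [e1, e2]
  have : plog p univ = 0 := by
    unfold plog pS
    rw [show (∑ ω ∈ (univ : Finset Ω), p ω) = 1 from hsum]
    simp
  rw [this]
  unfold Hent plog
  ring

lemma part_inf (P Q : Finpartition (univ : Finset Ω)) (a : Ω) :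
    (P ⊓ Q).part a = P.part a ∩ Q.part a := by
  refine ((P ⊓ Q).part_eq_of_mem ?_ ?_)
  · rw [Finpartition.parts_inf, Finset.mem_erase]
    constructor
    · intro h
      have : a ∈ P.part a ∩ Q.part a :=
        mem_inter.2 ⟨P.mem_part (mem_univ a), Q.mem_part (mem_univ a)⟩
      rw [h] at this
      exact absurd this (notMem_empty a)
    · exact mem_image.2 ⟨(P.part a, Q.part a),
        mem_product.2 ⟨P.part_mem.2 (mem_univ a), Q.part_mem.2 (mem_univ a)⟩, rfl⟩
  · exact mem_inter.2 ⟨P.mem_part (mem_univ a), Q.mem_part (mem_univ a)⟩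

lemma part_inf' {ι : Type*} (s : Finset ι) (hs : s.Nonempty)
    (X : ι → Finpartition (univ : Finset Ω)) (a : Ω) :
    (s.inf' hs X).part a = s.inf' hs (fun i => (X i).part a) := by
  induction hs using Finset.Nonempty.cons_induction with
  | singleton i => simp
  | cons i s hi hs ih =>
    rw [Finset.inf'_cons hs, Finset.inf'_cons hs, part_inf, ih]
    rfl

lemma part_inf'_eq_iff {ι : Type*} (s : Finset ι) (hs : s.Nonempty)
    (X : ι → Finpartition (univ : Finset Ω)) (a b : Ω) :
    (s.inf' hs X).part a = (s.inf' hs X).part b ↔ ∀ i ∈ s, (X i).part a = (X i).part b := by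
  rw [part_inf', part_inf']
  constructor
  · intro h i hi
    have hb : b ∈ s.inf' hs (fun i => (X i).part b) := by
      rw [← Finset.singleton_subset_iff]
      exact Finset.le_inf' hs _ (fun j hj =>
        Finset.singleton_subset_iff.2 ((X j).mem_part (mem_univ b)))
    rw [← h] at hb
    have hb' : b ∈ (X i).part a :=
      (Finset.inf'_le (fun j => (X j).part a) hi) hb
    exact ((X i).part_eq_of_mem ((X i).part_mem.2 (mem_univ a)) hb').symm
  · intro h
    exact Finset.inf'_congr hs rfl (fun i hi => h i hi)

lemma crossed_inf' {ι : Type*} (s : Finset ι) (hs : s.Nonempty)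
    (X : ι → Finpartition (univ : Finset Ω)) (S : Finset Ω) :
    crossed (s.inf' hs X) S ↔ ∃ i ∈ s, crossed (X i) S := by
  constructor
  · rintro h
    rw [crossed_iff_part] at h
    obtain ⟨a, ha, b, hb, hab⟩ := h
    rw [Ne, part_inf'_eq_iff] at hab
    push_neg at hab
    obtain ⟨i, hi, hne⟩ := hab
    exact ⟨i, hi, (crossed_iff_part _ _).2 ⟨a, ha, b, hb, hne⟩⟩
  · rintro ⟨i, hi, h⟩
    rw [crossed_iff_part] at h ⊢
    obtain ⟨a, ha, b, hb, hab⟩ := h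
    refine ⟨a, ha, b, hb, fun h => hab ?_⟩
    rw [part_inf'_eq_iff] at h
    exact h i hi

lemma content_inf' {ι : Type*} (s : Finset ι) (hs : s.Nonempty)
    (X : ι → Finpartition (univ : Finset Ω)) :
    content (s.inf' hs X) = s.biUnion (fun i => content (X i)) := by
  ext S
  simp only [content, Finset.mem_biUnion, mem_filter, mem_univ, true_and, crossed_inf']
  tauto

lemma sum_muSet_content {ι : Type*} [Fintype ι] (p : Ω → ℝ)
    (X : ι → Finpartition (univ : Finset Ω)) :
    ∑ i, muSet p (content (X i))
      = ∑ S ∈ (univ : Finset ι).biUnion (fun i => content (X i)),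
          (((univ : Finset ι).filter fun i => S ∈ content (X i)).card : ℝ) * mu p S := by
  set U := (univ : Finset ι).biUnion (fun i => content (X i)) with hU
  have step1 : ∀ i : ι, muSet p (content (X i)) = ∑ S ∈ U, (if S ∈ content (X i) then mu p S else 0) := by
    intro i
    rw [← Finset.sum_filter]
    unfold muSet
    congr 1
    ext S
    simp only [hU, mem_filter, Finset.mem_biUnion, mem_univ]
    tauto
  rw [Finset.sum_congr rfl (fun i _ => step1 i), Finset.sum_comm]
  refine Finset.sum_congr rfl (fun S _ => ?_)
  have hrw : (∑ i : ι, if S ∈ content (X i) then mu p S else 0)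
      = ∑ i : ι, (if S ∈ content (X i) then (1:ℝ) else 0) * mu p S :=
    Finset.sum_congr rfl (fun i _ => by by_cases h : S ∈ content (X i) <;> simp [h])
  rw [hrw, ← Finset.sum_mul, Finset.sum_boole]

end Aux

theorem totalCorrelation_eq {Ω : Type*} [Fintype Ω] [DecidableEq Ω] (p : Ω → ℝ)
    (hp : ∀ ω, 0 ≤ p ω) (hsum : ∑ ω, p ω = 1)
    {n : ℕ} (hn : 0 < n) (X : Fin n → Finpartition (univ : Finset Ω)) :
    (∑ i, Hent p (X i))
        - Hent p ((univ : Finset (Fin n)).inf'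
            (univ_nonempty_iff.mpr (Fin.pos_iff_nonempty.mp hn)) X)
      = (∑ i, muSet p (content (X i)))
          - muSet p ((univ : Finset (Fin n)).biUnion fun i => content (X i)) ∧
    (∑ i, Hent p (X i))
        - Hent p ((univ : Finset (Fin n)).inf'
            (univ_nonempty_iff.mpr (Fin.pos_iff_nonempty.mp hn)) X)
      = ∑ S ∈ (univ : Finset (Fin n)).biUnion (fun i => content (X i)),
          ((((univ : Finset (Fin n)).filter fun i => S ∈ content (X i)).card : ℝ) - 1)
            * mu p S := by
  classical
  set H := (univ_nonempty_iff.mpr (Fin.pos_iff_nonempty.mp hn))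
  set U := (univ : Finset (Fin n)).biUnion (fun i => content (X i)) with hU
  have hC : content ((univ : Finset (Fin n)).inf' H X) = U := content_inf' _ H X
  have hmu : ∀ i, muSet p (content (X i)) = Hent p (X i) := fun i => muSet_content p hsum (X i)
  have hinf : muSet p U = Hent p ((univ : Finset (Fin n)).inf' H X) := by
    rw [← hC]; exact muSet_content p hsum _
  have first : (∑ i, Hent p (X i)) - Hent p ((univ : Finset (Fin n)).inf' H X)
      = (∑ i, muSet p (content (X i))) - muSet p U := by
    rw [hinf, Finset.sum_congr rfl (fun i _ => (hmu i).symm)]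
  have key2 := sum_muSet_content p X
  have second : (∑ i, muSet p (content (X i))) - muSet p U
      = ∑ S ∈ U, ((((univ : Finset (Fin n)).filter fun i => S ∈ content (X i)).card : ℝ) - 1)
          * mu p S := by
    rw [key2]
    unfold muSet
    rw [← Finset.sum_sub_distrib]
    exact Finset.sum_congr rfl (fun S _ => by ring)
  exact ⟨first, first.trans second⟩
end
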